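/- arXiv:math/9912230 — 3 statements merged into one kernel-verified Lean document; each statement's English description precedes it below -/
import Mathlib

section
/- If all coefficients a_1, ..., a_m are nonnegative integers and a_m ≥ 1, then the matrix R = I + C is a nonnegative matrix and R^m has all entries strictly positive (R is primitive). -/
/-- The matrix `R = I + C`, `C` the companion matrix of `x^m - a_1 x^{m-1} - ... - a_m`. -/
def Rmat (m : ℕ) (a : Fin m → ℤ) : Matrix (Fin m) (Fin m) ℤ :=
  fun i j =>
    (if i.val = 0 then a j else if i.val = j.val + 1 then 1 else 0) +
      (if i = j then 1 else 0)

lemma Rmat_nonneg (m : ℕ) (a : Fin m → ℤ) (h0 : ∀ i, 0 ≤ a i) :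
    ∀ i j, 0 ≤ Rmat m a i j := by
  intro i j
  unfold Rmat
  have := h0 j
  split_ifs <;> linarith

lemma Rmat_pow_nonneg (m : ℕ) (a : Fin m → ℤ) (h0 : ∀ i, 0 ≤ a i) :
    ∀ k i j, 0 ≤ (Rmat m a ^ k) i j := by
  intro k
  induction k with
  | zero =>
    intro i j
    simp only [pow_zero, Matrix.one_apply]
    split_ifs <;> norm_num
  | succ k ih =>
    intro i j
    rw [pow_succ, Matrix.mul_apply]
    exact Finset.sum_nonneg fun l _ => mul_nonneg (ih i l) (Rmat_nonneg m a h0 l j)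

lemma Rmat_key (m : ℕ) (a : Fin m → ℤ) (hm : 0 < m) (h0 : ∀ i, 0 ≤ a i)
    (hlast : 1 ≤ a ⟨m - 1, Nat.sub_lt hm Nat.one_pos⟩) :
    ∀ k (i j : Fin m),
      ((j.val ≤ i.val ∧ i.val - j.val ≤ k) ∨ (i.val < j.val ∧ i.val + m - j.val ≤ k)) →
      0 < (Rmat m a ^ k) i j := by
  intro k
  induction k with
  | zero =>
    intro i j h
    have hi := i.isLt; have hj := j.isLt
    have hij : i = j := by apply Fin.ext; omega
    subst hij
    simp [Matrix.one_apply]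
  | succ k ih =>
    intro i j h
    rw [pow_succ', Matrix.mul_apply]
    have hi := i.isLt; have hj := j.isLt
    obtain ⟨l, hl1, hl2⟩ : ∃ l : Fin m, 0 < Rmat m a i l ∧
        ((j.val ≤ l.val ∧ l.val - j.val ≤ k) ∨ (l.val < j.val ∧ l.val + m - j.val ≤ k)) := by
      by_cases hd : (j.val ≤ i.val ∧ i.val - j.val ≤ k) ∨ (i.val < j.val ∧ i.val + m - j.val ≤ k)
      · refine ⟨i, ?_, hd⟩
        unfold Rmat
        have := h0 i
        split_ifs with h1 h2 <;> first | linarith | omega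
      · by_cases hiz : i.val = 0
        · -- i = 0, use l = m-1 (edge with weight a_{m-1} ≥ 1)
          refine ⟨⟨m - 1, by omega⟩, ?_, ?_⟩
          · unfold Rmat
            have h1 : 1 ≤ a ⟨m - 1, Nat.sub_lt hm Nat.one_pos⟩ := hlast
            split_ifs <;> linarith
          · simp only [Fin.val_mk]; omega
        · -- i ≥ 1, use l = i - 1 (subdiagonal 1)
          refine ⟨⟨i.val - 1, by omega⟩, ?_, ?_⟩
          · unfold Rmat
            have hne : ¬ (i = (⟨i.val - 1, by omega⟩ : Fin m)) := by
              intro hcon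
              have := congrArg Fin.val hcon
              simp at this
              omega
            split_ifs <;> simp only [Fin.val_mk] at * <;> first | linarith | omega
          · simp only [Fin.val_mk]
            omega
    apply Finset.sum_pos'
    · intro x _
      exact mul_nonneg (Rmat_nonneg m a h0 i x) (Rmat_pow_nonneg m a h0 k x j)
    · exact ⟨l, Finset.mem_univ l, mul_pos hl1 (ih l j hl2)⟩

/-- if all `a_i ≥ 0` and `a_m ≥ 1`, then `R = I + C` is a nonnegative
matrix and `R^m` has all entries strictly positive (`R` is primitive). -/
theorem Rmat_primitive (m : ℕ) (hm : 0 < m) (a : Fin m → ℤ)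
    (h0 : ∀ i, 0 ≤ a i) (hlast : 1 ≤ a ⟨m - 1, by omega⟩) :
    (∀ i j, 0 ≤ Rmat m a i j) ∧ (∀ i j, 0 < (Rmat m a ^ m) i j) := by
  refine ⟨Rmat_nonneg m a h0, fun i j => ?_⟩
  apply Rmat_key m a hm h0 hlast
  have hi := i.isLt; have hj := j.isLt
  omega
end

section
/- For p(x) = x^3 - 2 (so a_1 = a_2 = 0, a_3 = 2), the sequence of vectors n_i = R^i (1,1,1)^T with R = [[1,0,2],[1,1,0],[0,1,1]] satisfies lim_{i→∞} (n_i)_1 / (n_i)_2 = 2^{1/3}. -/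
open Filter

noncomputable def crα : ℝ := (2 : ℝ) ^ ((1 : ℝ) / 3)

noncomputable def crs : ℕ → ℝ × ℝ × ℝ
  | 0 => (1, 1, 1)
  | n + 1 => ((crs n).1 + 2 * (crs n).2.2, (crs n).1 + (crs n).2.1,
      (crs n).2.1 + (crs n).2.2)

noncomputable def cru (i : ℕ) : ℝ := (crs i).1 - crα * (crs i).2.1
noncomputable def crv (i : ℕ) : ℝ := (crs i).2.1 - crα * (crs i).2.2
noncomputable def crμ : ℂ := ((1 - crα / 2 : ℝ) : ℂ) + ((crα * Real.sqrt 3 / 2 : ℝ) : ℂ) * Complex.I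
noncomputable def crw : ℂ := ((crα / 2 : ℝ) : ℂ) + ((crα * Real.sqrt 3 / 2 : ℝ) : ℂ) * Complex.I
noncomputable def crz (i : ℕ) : ℂ := ((cru i : ℝ) : ℂ) + crw * ((crv i : ℝ) : ℂ)

lemma crα_pos : 0 < crα := Real.rpow_pos_of_pos (by norm_num) _

lemma crα_gt_one : 1 < crα :=
  Real.one_lt_rpow_iff_of_pos (by norm_num) |>.mpr (Or.inl ⟨by norm_num, by norm_num⟩)

lemma crα_cube : crα ^ 3 = 2 := by
  rw [crα, ← Real.rpow_natCast ((2:ℝ) ^ ((1:ℝ)/3)) 3, ← Real.rpow_mul (by norm_num)]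
  norm_num

lemma crs_ge_one : ∀ i, 1 ≤ (crs i).1 ∧ 1 ≤ (crs i).2.1 ∧ 1 ≤ (crs i).2.2 := by
  intro i
  induction i with
  | zero => simp [crs]
  | succ n ih => obtain ⟨h1, h2, h3⟩ := ih; refine ⟨?_, ?_, ?_⟩ <;> simp [crs] <;> linarith

lemma crs_mulVec (R : Matrix (Fin 3) (Fin 3) ℝ) (hR : R = !![1, 0, 2; 1, 1, 0; 0, 1, 1]) :
    ∀ i, (R ^ i).mulVec ![1, 1, 1] = ![(crs i).1, (crs i).2.1, (crs i).2.2] := by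
  intro i
  induction i with
  | zero => simp [crs, Matrix.one_mulVec]
  | succ n ih =>
    rw [pow_succ', ← Matrix.mulVec_mulVec, ih]
    funext j
    fin_cases j <;>
      simp [hR, crs, Matrix.mulVec, dotProduct, Fin.sum_univ_three]

lemma crs_b_step (i : ℕ) : 2 * (crs i).2.1 ≤ (crs (i + 3)).2.1 := by
  obtain ⟨h1, h2, h3⟩ := crs_ge_one i
  obtain ⟨g1, g2, g3⟩ := crs_ge_one (i+1)
  simp only [crs]
  linarith

lemma crs_b_lower : ∀ i, crα ^ i ≤ crα ^ 2 * (crs i).2.1 := by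
  intro i
  induction i using Nat.strong_induction_on with
  | _ i ih =>
    have h1 := crα_gt_one
    match i with
    | 0 => show crα ^ 0 ≤ crα ^ 2 * (1:ℝ); nlinarith
    | 1 =>
      have e : (crs 1).2.1 = 2 := by norm_num [crs]
      rw [e]; nlinarith
    | 2 =>
      have e : (crs 2).2.1 = 5 := by norm_num [crs]
      rw [e]; nlinarith
    | n + 3 =>
      have hn := ih n (by omega)
      have hb := crs_b_step n
      calc crα ^ (n + 3) = crα ^ 3 * crα ^ n := by ring
        _ = 2 * crα ^ n := by rw [crα_cube]
        _ ≤ 2 * (crα ^ 2 * (crs n).2.1) := by nlinarith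
        _ = crα ^ 2 * (2 * (crs n).2.1) := by ring
        _ ≤ crα ^ 2 * (crs (n + 3)).2.1 := by nlinarith

lemma sqrt3_sq : Real.sqrt 3 * Real.sqrt 3 = 3 := Real.mul_self_sqrt (by norm_num)

lemma sqrt3_ge_one : 1 ≤ Real.sqrt 3 := by
  nlinarith [sqrt3_sq, Real.sqrt_nonneg 3]

lemma cru_rec (i : ℕ) : cru (i + 1) = (1 - crα) * cru i - crα ^ 2 * crv i := by
  simp only [cru, crv, crs]
  linear_combination (-(crs i).2.2) * crα_cube

lemma crv_rec (i : ℕ) : crv (i + 1) = cru i + crv i := by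
  simp only [cru, crv, crs]; ring

lemma crA : (1 : ℂ) - (crα : ℂ) + crw = crμ := by
  simp only [crμ, crw, Complex.ext_iff, Complex.add_re, Complex.add_im, Complex.sub_re,
    Complex.sub_im, Complex.one_re, Complex.one_im, Complex.ofReal_re,
    Complex.ofReal_im, Complex.mul_re, Complex.mul_im, Complex.I_re, Complex.I_im]
  constructor <;> ring

lemma crB : crw - (crα : ℂ) ^ 2 = crμ * crw := by
  rw [show ((crα:ℂ))^2 = ((crα^2 : ℝ) : ℂ) by push_cast; ring]
  simp only [crμ, crw, Complex.ext_iff, Complex.add_re, Complex.add_im, Complex.sub_re,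
    Complex.sub_im, Complex.one_re, Complex.one_im, Complex.ofReal_re, Complex.ofReal_im,
    Complex.mul_re, Complex.mul_im, Complex.I_re, Complex.I_im]
  constructor <;> nlinarith [sqrt3_sq]

lemma crz_rec (i : ℕ) : crz (i + 1) = crμ * crz i := by
  simp only [crz, cru_rec, crv_rec]
  push_cast
  linear_combination ((cru i : ℝ) : ℂ) * crA + ((crv i : ℝ) : ℂ) * crB

lemma crz_pow (i : ℕ) : crz i = crμ ^ i * crz 0 := by
  induction i with
  | zero => simp
  | succ n ih => rw [crz_rec, ih, pow_succ]; ring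

lemma crz_re (i : ℕ) : (crz i).re = cru i + (crα / 2) * crv i := by
  simp [crz, crw]

lemma crz_im (i : ℕ) : (crz i).im = (crα * Real.sqrt 3 / 2) * crv i := by
  simp [crz, crw]

lemma cru_bound (i : ℕ) : |cru i| ≤ 2 * ‖crz i‖ := by
  have hre : |(crz i).re| ≤ ‖crz i‖ := Complex.abs_re_le_norm _
  have him : |(crz i).im| ≤ ‖crz i‖ := Complex.abs_im_le_norm _
  have h1 : |(crα * Real.sqrt 3 / 2) * crv i| ≤ ‖crz i‖ := by rw [← crz_im]; exact him
  have h2 : (crα * Real.sqrt 3 / 2) * |crv i| ≤ ‖crz i‖ := by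
    rwa [abs_mul, abs_of_pos (by nlinarith [crα_pos, sqrt3_ge_one] : (0:ℝ) < crα * Real.sqrt 3 / 2)] at h1
  have h3 : cru i = (crz i).re - (crα / 2) * crv i := by rw [crz_re]; ring
  have h4 : |cru i| ≤ |(crz i).re| + (crα / 2) * |crv i| := by
    rw [h3]
    refine (abs_sub _ _).trans ?_
    rw [abs_mul, abs_of_pos (by nlinarith [crα_pos] : (0:ℝ) < crα / 2)]
  have h5 : (crα / 2) * |crv i| ≤ ‖crz i‖ := by
    nlinarith [h2, mul_nonneg (mul_nonneg crα_pos.le (sub_nonneg.2 sqrt3_ge_one)) (abs_nonneg (crv i))]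
  linarith

lemma crμ_lt : ‖crμ‖ < crα := by
  have h1 : ‖crμ‖ ^ 2 = 1 - crα + crα ^ 2 := by
    rw [Complex.sq_norm, Complex.normSq_apply]
    simp only [crμ, Complex.add_re, Complex.add_im, Complex.ofReal_re, Complex.ofReal_im,
      Complex.mul_re, Complex.mul_im, Complex.I_re, Complex.I_im]
    nlinarith [sqrt3_sq]
  have h2 : ‖crμ‖ ^ 2 < crα ^ 2 := by rw [h1]; nlinarith [crα_gt_one]
  exact lt_of_pow_lt_pow_left₀ 2 crα_pos.le h2

/-- for `p(x) = x³ - 2`, with `R = I + C = [[1,0,2],[1,1,0],[0,1,1]]` and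
`n_i = R^i (1,1,1)ᵀ`, the ratio `(n_i)_1 / (n_i)_2` converges to the real cube root of 2. -/
theorem cube_root_two_limit (R : Matrix (Fin 3) (Fin 3) ℝ)
    (hR : R = !![1, 0, 2; 1, 1, 0; 0, 1, 1]) :
    Tendsto (fun i : ℕ => (R ^ i).mulVec ![1, 1, 1] 0 / (R ^ i).mulVec ![1, 1, 1] 1)
      atTop (nhds ((2 : ℝ) ^ ((1 : ℝ) / 3))) := by
  have key := crs_mulVec R hR
  have hbpos : ∀ i, (0:ℝ) < (crs i).2.1 := fun i => lt_of_lt_of_le one_pos (crs_ge_one i).2.1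
  have heq : (fun i : ℕ => (R ^ i).mulVec ![1, 1, 1] 0 / (R ^ i).mulVec ![1, 1, 1] 1)
      = fun i : ℕ => crα + cru i / (crs i).2.1 := by
    funext i
    have k0 : (R ^ i).mulVec ![1, 1, 1] 0 = (crs i).1 := (congrFun (key i) 0).trans rfl
    have k1 : (R ^ i).mulVec ![1, 1, 1] 1 = (crs i).2.1 := (congrFun (key i) 1).trans rfl
    have hb : (crs i).2.1 ≠ 0 := (hbpos i).ne'
    rw [k0, k1, cru]
    field_simp
    ring
  rw [heq, show (2 : ℝ) ^ ((1 : ℝ) / 3) = crα from rfl]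
  have h0 : Tendsto (fun i : ℕ => cru i / (crs i).2.1) atTop (nhds 0) := by
    apply squeeze_zero_norm
      (a := fun i : ℕ => (2 * ‖crz 0‖ * crα ^ 2) * (‖crμ‖ / crα) ^ i)
    · intro n
      have hz : ‖crz n‖ = ‖crμ‖ ^ n * ‖crz 0‖ := by
        rw [crz_pow n, norm_mul, norm_pow]
      have h1 : |cru n| ≤ 2 * (‖crμ‖ ^ n * ‖crz 0‖) := by
        rw [← hz]; exact cru_bound n
      have h2 := crs_b_lower n
      have hb := hbpos n
      have hαn : (0:ℝ) < crα ^ n := pow_pos crα_pos n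
      rw [Real.norm_eq_abs, abs_div, abs_of_pos hb, div_le_iff₀ hb, div_pow,
        mul_comm (2 * ‖crz 0‖ * crα ^ 2), mul_assoc, div_mul_eq_mul_div,
        le_div_iff₀ hαn]
      have hA : (0:ℝ) ≤ ‖crμ‖ ^ n := pow_nonneg (norm_nonneg _) n
      have hz0 : (0:ℝ) ≤ ‖crz 0‖ := norm_nonneg _
      nlinarith [mul_le_mul h1 h2 hαn.le (by nlinarith : (0:ℝ) ≤ 2 * (‖crμ‖ ^ n * ‖crz 0‖))]
    · have hq1 : ‖crμ‖ / crα < 1 := (div_lt_one crα_pos).mpr crμ_lt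
      have hq0 : 0 ≤ ‖crμ‖ / crα := div_nonneg (norm_nonneg _) crα_pos.le
      simpa using (tendsto_pow_atTop_nhds_zero_of_lt_one hq0 hq1).const_mul
        (2 * ‖crz 0‖ * crα ^ 2)
  simpa using tendsto_const_nhds.add h0
end

section
/- Every real algebraic number that is the largest real root of some monic integer polynomial arises as the limit of ratios n_1(W_i)/n_2(W_i) of signed letter counts for a suitable replacement sequence, provided the dominance condition |1+λ| > |1+μ| holds for all other roots μ and the initial count vector has nonzero dominant component; in particular such λ is computable from the integer sequences (n_j(W_i))_i. -/
/-- Letters: an index in `Fin m` together with a sign (`true` = `+`). -/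
abbrev Letter (m : ℕ) := Fin m × Bool

/-- Replacement of a single letter `(i, s)`: `|a i|` copies of letter `1` (index `0`),
with sign `s` if `a i ≥ 0` and `!s` otherwise, followed by `(i, s)` and,
when `i < m`, by `(i+1, s)`. -/
def repl (m : ℕ) [NeZero m] (a : Fin m → ℤ) (l : Letter m) : List (Letter m) :=
  List.replicate (a l.1).natAbs (0, if 0 ≤ a l.1 then l.2 else !l.2)
    ++ [l]
    ++ if h : l.1.val + 1 < m then [(⟨l.1.val + 1, h⟩, l.2)] else []

/-- The induced replacement map `R*` on words: replace every letter and concatenate. -/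
def replWord (m : ℕ) [NeZero m] (a : Fin m → ℤ) (W : List (Letter m)) : List (Letter m) :=
  W.flatMap (repl m a)

/-- Signed counting map `n`: the `i`-th component is the number of occurrences of
`(i, +)` minus the number of occurrences of `(i, −)`. -/
def countVec (m : ℕ) (W : List (Letter m)) : Fin m → ℤ :=
  fun i => (W.count (i, true) : ℤ) - (W.count (i, false) : ℤ)

lemma countVec_append' (m : ℕ) (A B : List (Letter m)) :
    countVec m (A ++ B) = countVec m A + countVec m B := by
  funext i
  simp only [countVec, List.count_append, Pi.add_apply]
  push_cast; ring

set_option maxHeartbeats 1000000 in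
lemma countVec_repl' (m : ℕ) [NeZero m] (a : Fin m → ℤ) (l : Letter m) (i : Fin m) :
    countVec m (repl m a l) i = Rmat m a i l.1 * (if l.2 then 1 else -1) := by
  obtain ⟨i0, s⟩ := l
  simp only [countVec, repl, List.count_append, Rmat, List.count_replicate,
    List.count_singleton', List.count_cons, List.count_nil]
  rcases Nat.lt_or_ge (i0.val + 1) m with h | h
  · rw [dif_pos h]
    cases s <;> by_cases ha : 0 ≤ a i0 <;>
      simp only [List.count_cons, List.count_nil, beq_iff_eq, Prod.mk.injEq, Fin.ext_iff,
        Fin.val_zero, Bool.true_eq_false, Bool.false_eq_true, and_true, and_false,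
        Bool.not_true, Bool.not_false, if_true, if_false, Int.natCast_natAbs, abs_eq_max_neg, ha] <;>
      split_ifs <;> omega
  · rw [dif_neg (not_lt.mpr h)]
    cases s <;> by_cases ha : 0 ≤ a i0 <;>
      simp only [List.count_cons, List.count_nil, beq_iff_eq, Prod.mk.injEq, Fin.ext_iff,
        Fin.val_zero, Bool.true_eq_false, Bool.false_eq_true, and_true, and_false,
        Bool.not_true, Bool.not_false, if_true, if_false, Int.natCast_natAbs, abs_eq_max_neg, ha] <;>
      split_ifs <;> omega

lemma countVec_replWord' (m : ℕ) [NeZero m] (a : Fin m → ℤ) (W : List (Letter m)) :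
    countVec m (replWord m a W) = (Rmat m a).mulVec (countVec m W) := by
  induction W with
  | nil =>
    have h0 : countVec m ([] : List (Letter m)) = 0 := by funext i; simp [countVec]
    rw [show replWord m a [] = [] from rfl, h0, Matrix.mulVec_zero]
  | cons l T ih =>
    have h1 : replWord m a (l :: T) = repl m a l ++ replWord m a T := rfl
    rw [h1, countVec_append', show (l :: T) = [l] ++ T from rfl, countVec_append',
      Matrix.mulVec_add, ih]
    congr 1
    funext i
    rw [countVec_repl']
    have h2 : countVec m [l] = fun j => if j = l.1 then (if l.2 then 1 else -1) else 0 := by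
      funext j
      obtain ⟨i0, s⟩ := l
      cases s <;> simp [countVec, List.count_singleton', Prod.mk.injEq] <;>
        split_ifs <;> simp_all [List.count_cons] <;> exact Ne.symm ‹_›
    rw [h2]
    simp [Matrix.mulVec, dotProduct, mul_ite, mul_zero, Finset.sum_ite_eq']

lemma countVec_iterate' (m : ℕ) [NeZero m] (a : Fin m → ℤ) (W : List (Letter m)) (n : ℕ) :
    countVec m ((replWord m a)^[n] W) = ((Rmat m a) ^ n).mulVec (countVec m W) := by
  induction n with
  | zero => simp
  | succ n ih =>
    rw [Function.iterate_succ_apply', countVec_replWord', ih, Matrix.mulVec_mulVec, ← pow_succ']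

lemma cast_mulVec' (m : ℕ) (A : Matrix (Fin m) (Fin m) ℤ) (v : Fin m → ℤ) :
    (fun j => ((A.mulVec v j : ℤ) : ℂ)) = (A.map (Int.cast : ℤ → ℂ)).mulVec (fun j => ((v j : ℤ) : ℂ)) := by
  funext j
  simp [Matrix.mulVec, dotProduct, Matrix.map_apply]

open Polynomial Filter

/-- for a monic integer polynomial `p` with distinct roots whose largest
real root `λ` satisfies the dominance condition `|1+λ| > |1+μ|` for all other roots `μ`,
and any initial word `W₀` whose signed count vector has nonzero coefficient on the
dominant eigenvector of `R = I + C` in an eigenbasis, the ratios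
`n₁(W_i)/n₂(W_i)` of signed letter counts of `W_i = (R*)^i(W₀)` converge to `λ`. -/
theorem largest_root_from_replacement_counts (m : ℕ) [NeZero m] (hm : 1 < m)
    (a : Fin m → ℤ)
    (p : ℂ[X]) (hp : p = X ^ m - ∑ i : Fin m, C (a i : ℂ) * X ^ (m - 1 - i.val))
    (hdistinct : p.roots.Nodup)
    (lam : ℝ) (hroot : p.IsRoot (lam : ℂ))
    (hlargest : ∀ x : ℝ, p.IsRoot (x : ℂ) → x ≤ lam)
    (hdom : ∀ μ ∈ p.roots, μ ≠ (lam : ℂ) → ‖1 + μ‖ < |1 + lam|)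
    (b : Module.Basis (Fin m) ℂ (Fin m → ℂ)) (μ : Fin m → ℂ)
    (hμroots : ∀ k, μ k ∈ p.roots) (hμ0 : μ 0 = (lam : ℂ))
    (heig : ∀ k, ((Rmat m a).map (Int.cast : ℤ → ℂ)).mulVec (b k) = (1 + μ k) • b k)
    (hb0 : b 0 = fun j : Fin m => (lam : ℂ) ^ (m - 1 - j.val))
    (W₀ : List (Letter m))
    (hc : b.repr (fun j => (countVec m W₀ j : ℂ)) 0 ≠ 0) :
    Tendsto
      (fun i : ℕ =>
        (countVec m ((replWord m a)^[i] W₀) 0 : ℝ) /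
          (countVec m ((replWord m a)^[i] W₀) ⟨1, hm⟩ : ℝ))
      atTop (nhds lam) := by
  classical
  have hm1 : (⟨m - 1, by omega⟩ : Fin m).val = m - 1 := rfl
  -- polynomial degree facts
  have hqdeg : (∑ i : Fin m, C ((a i : ℂ)) * X ^ (m - 1 - i.val)).natDegree < m :=
    lt_of_le_of_lt
      (natDegree_sum_le_of_forall_le _ _ fun i _ =>
        le_trans (natDegree_C_mul_X_pow_le _ _) (by omega : m - 1 - i.val ≤ m - 1))
      (by omega)
  have hpdeg : p.natDegree = m := by
    rw [hp, natDegree_sub_eq_left_of_natDegree_lt (by rw [natDegree_X_pow]; exact hqdeg),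
      natDegree_X_pow]
  have hpne : p ≠ 0 := by
    intro h; rw [h, natDegree_zero] at hpdeg; omega
  have hlam_mem : (lam : ℂ) ∈ p.roots := (mem_roots hpne).mpr hroot
  have hcard : p.roots.card = m :=
    ((splits_iff_card_roots).mp (IsAlgClosed.splits p)).trans hpdeg
  have habs : ‖1 + (lam : ℂ)‖ = |1 + lam| := by
    rw [show (1 + (lam : ℂ)) = ((1 + lam : ℝ) : ℂ) by push_cast; ring, Complex.norm_real, Real.norm_eq_abs]
  have hLne : (1 + (lam : ℂ)) ≠ 0 := by
    obtain ⟨x, hx⟩ := Multiset.card_pos_iff_exists_mem.mp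
      (show 0 < (p.roots.erase (lam : ℂ)).card by
        have he : (p.roots.erase (lam : ℂ)).card = m - 1 := by
          rw [Multiset.card_erase_of_mem hlam_mem, hcard]
          rfl
        rw [he]; omega)
    have hxne : x ≠ (lam : ℂ) := ((Multiset.Nodup.mem_erase_iff hdistinct).mp hx).1
    have hxroot : x ∈ p.roots := Multiset.mem_of_mem_erase hx
    have hlt := hdom x hxroot hxne
    have hpos : 0 < ‖1 + (lam : ℂ)‖ := by
      rw [habs]; exact lt_of_le_of_lt (norm_nonneg _) hlt
    intro h; rw [h] at hpos; simp at hpos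
  -- eigenvector structure
  have hrec : ∀ (k : Fin m) (j : Fin m) (hj : j.val + 1 < m),
      b k j = μ k * b k ⟨j.val + 1, hj⟩ := by
    intro k j hj
    have h1 := congrFun (heig k) ⟨j.val + 1, hj⟩
    have h2 : ∀ t : Fin m, ((Rmat m a).map (Int.cast : ℤ → ℂ)) ⟨j.val + 1, hj⟩ t
        = (if t = j then 1 else 0) + (if t = (⟨j.val + 1, hj⟩ : Fin m) then 1 else 0) := by
      intro t
      simp only [Matrix.map_apply, Rmat]
      rw [if_neg (show ¬((⟨j.val + 1, hj⟩ : Fin m).val = 0) by simp)]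
      have e2 : ((⟨j.val + 1, hj⟩ : Fin m).val = t.val + 1) ↔ (t = j) := by
        simp only [Fin.ext_iff]
        constructor <;> (intro h; omega)
      have e3 : ((⟨j.val + 1, hj⟩ : Fin m) = t) ↔ (t = (⟨j.val + 1, hj⟩ : Fin m)) := eq_comm
      rw [if_congr e2 rfl rfl, if_congr e3 rfl rfl]
      push_cast
      rw [add_comm]
    simp only [Matrix.mulVec, dotProduct, Pi.smul_apply, smul_eq_mul] at h1
    rw [Finset.sum_congr rfl (fun t _ => by rw [h2 t])] at h1
    simp only [add_mul, Finset.sum_add_distrib, ite_mul, one_mul, zero_mul,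
      Finset.sum_ite_eq', Finset.mem_univ, if_true] at h1
    linear_combination h1
  have hlast : ∀ (k : Fin m) (t : ℕ), t < m →
      b k ⟨m - 1 - t, by omega⟩ = μ k ^ t * b k ⟨m - 1, by omega⟩ := by
    intro k t
    induction t with
    | zero => intro _; simp
    | succ t ih =>
      intro ht
      have h1 : (m - 1 - (t + 1)) + 1 < m := by omega
      have h2 := hrec k ⟨m - 1 - (t + 1), by omega⟩ h1
      have he : (⟨(m - 1 - (t + 1)) + 1, h1⟩ : Fin m) = ⟨m - 1 - t, by omega⟩ := by
        simp [Fin.ext_iff]; omega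
      rw [he] at h2
      rw [h2, ih (by omega), pow_succ]; ring
  have hμne : ∀ k : Fin m, k ≠ 0 → μ k ≠ (lam : ℂ) := by
    intro k hk hkeq
    have hbk : ∀ j : Fin m, b k j = (lam : ℂ) ^ (m - 1 - j.val) * b k ⟨m - 1, by omega⟩ := by
      intro j
      have ht : m - 1 - j.val < m := by omega
      have h3 := hlast k (m - 1 - j.val) ht
      have he : (⟨m - 1 - (m - 1 - j.val), by omega⟩ : Fin m) = j := by
        simp [Fin.ext_iff]; omega
      rw [he] at h3
      rw [h3, hkeq]
    have hkb : b k = (b k ⟨m - 1, by omega⟩) • b 0 := by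
      funext j
      simp [hb0, hbk j, mul_comm]
    have h2 : (b.repr (b k)) k = (b.repr ((b k ⟨m - 1, by omega⟩) • b 0)) k := by rw [← hkb]
    rw [map_smul] at h2
    simp only [Module.Basis.repr_self, Finsupp.smul_apply, smul_eq_mul,
      Finsupp.single_eq_same, Finsupp.single_eq_of_ne' (Ne.symm hk), mul_zero] at h2
    exact one_ne_zero h2
  have hlt : ∀ k : Fin m, k ≠ 0 →
      ‖1 + μ k‖ < ‖1 + (lam : ℂ)‖ := by
    intro k hk
    rw [habs]; exact hdom (μ k) (hμroots k) (hμne k hk)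
  -- key formula
  set v0 : Fin m → ℂ := fun j => ((countVec m W₀ j : ℤ) : ℂ) with hv0
  have hc0 : b.repr v0 0 ≠ 0 := hc
  have key : ∀ i : ℕ, (fun j => ((countVec m ((replWord m a)^[i] W₀) j : ℤ) : ℂ))
      = ∑ k : Fin m, (b.repr v0 k * (1 + μ k) ^ i) • b k := by
    intro i
    induction i with
    | zero =>
      simp only [Function.iterate_zero_apply, pow_zero, mul_one]
      exact (b.sum_repr v0).symm
    | succ i ih =>
      have h1 : (fun j => ((countVec m ((replWord m a)^[i + 1] W₀) j : ℤ) : ℂ))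
          = ((Rmat m a).map (Int.cast : ℤ → ℂ)).mulVec
              (fun j => ((countVec m ((replWord m a)^[i] W₀) j : ℤ) : ℂ)) := by
        rw [show (replWord m a)^[i + 1] W₀ = replWord m a ((replWord m a)^[i] W₀) from
          Function.iterate_succ_apply' _ _ _, countVec_replWord']
        exact cast_mulVec' m _ _
      rw [h1, ih, ← Matrix.mulVecLin_apply, map_sum]
      refine Finset.sum_congr rfl fun k _ => ?_
      rw [map_smul, Matrix.mulVecLin_apply, heig k, smul_smul]
      congr 1
      ring
  have keyj : ∀ (i : ℕ) (j : Fin m), ((countVec m ((replWord m a)^[i] W₀) j : ℤ) : ℂ)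
      = ∑ k : Fin m, (b.repr v0 k * (1 + μ k) ^ i) * b k j := by
    intro i j
    have h := congrFun (key i) j
    simpa using h
  rcases eq_or_ne lam 0 with hlam | hlam
  · -- λ = 0 : numerator is eventually 0
    have hnorm : ∀ k : Fin m, k ≠ 0 → ‖(1 + μ k)‖ < 1 := by
      intro k hk
      have := hlt k hk
      rw [hlam] at this
      simpa using this
    have hb00 : b 0 0 = 0 := by
      rw [hb0]
      show ((lam : ℂ)) ^ (m - 1 - (0 : Fin m).val) = 0
      have h0 : m - 1 - ((0 : Fin m).val) = m - 1 := by simp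
      rw [h0, hlam]
      push_cast
      exact zero_pow (by omega)
    have htend : Tendsto (fun i : ℕ => ((countVec m ((replWord m a)^[i] W₀) 0 : ℤ) : ℂ))
        atTop (nhds 0) := by
      have h2 : Tendsto (fun i : ℕ => ∑ k : Fin m, (b.repr v0 k * (1 + μ k) ^ i) * b k 0)
          atTop (nhds (∑ k : Fin m, (0 : ℂ))) := by
        apply tendsto_finset_sum
        intro k _
        rcases eq_or_ne k 0 with rfl | hk
        · simp [hb00]
        · have h3 := tendsto_pow_atTop_nhds_zero_of_norm_lt_one (hnorm k hk)
          have h4 := (h3.const_mul (b.repr v0 k)).mul_const (b k 0)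
          simpa [mul_assoc] using h4
      simp only [Finset.sum_const_zero] at h2
      exact h2.congr fun i => (keyj i 0).symm
    have hev : ∀ᶠ i in atTop, countVec m ((replWord m a)^[i] W₀) 0 = 0 := by
      have h1 := Metric.tendsto_nhds.mp htend 1 one_pos
      filter_upwards [h1] with i hi
      by_contra hne
      have h2 : (1 : ℝ) ≤ ‖((countVec m ((replWord m a)^[i] W₀) 0 : ℤ) : ℂ)‖ := by
        rw [Complex.norm_intCast]
        exact_mod_cast Int.one_le_abs hne
      rw [dist_zero_right] at hi
      linarith
    rw [hlam]
    refine Tendsto.congr' ?_ tendsto_const_nhds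
    filter_upwards [hev] with i hi
    simp [hi]
  · -- λ ≠ 0
    have hlamC : ((lam : ℂ)) ≠ 0 := by exact_mod_cast hlam
    have hLpow : ∀ i : ℕ, (1 + (lam : ℂ)) ^ i ≠ 0 := fun i => pow_ne_zero _ hLne
    have hratio : ∀ k : Fin m, k ≠ 0 → ‖(1 + μ k) / (1 + (lam : ℂ))‖ < 1 := by
      intro k hk
      rw [norm_div, div_lt_one (by
        have := hlt k hk
        have h0 : 0 ≤ ‖1 + μ k‖ := norm_nonneg _
        show (0:ℝ) < ‖(1 + (lam : ℂ))‖
        exact lt_of_le_of_lt h0 this)]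
      exact hlt k hk
    have hg : ∀ j : Fin m,
        Tendsto (fun i : ℕ => ((countVec m ((replWord m a)^[i] W₀) j : ℤ) : ℂ) /
          (b.repr v0 0 * (1 + (lam : ℂ)) ^ i)) atTop (nhds (b 0 j)) := by
      intro j
      have hform : ∀ i : ℕ, ((countVec m ((replWord m a)^[i] W₀) j : ℤ) : ℂ) /
          (b.repr v0 0 * (1 + (lam : ℂ)) ^ i)
          = ∑ k : Fin m, (b.repr v0 k * b k j / b.repr v0 0) *
              ((1 + μ k) / (1 + (lam : ℂ))) ^ i := by
        intro i
        rw [keyj, Finset.sum_div]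
        refine Finset.sum_congr rfl fun k _ => ?_
        rw [div_pow]
        field_simp
      have h2 : Tendsto (fun i : ℕ => ∑ k : Fin m, (b.repr v0 k * b k j / b.repr v0 0) *
          ((1 + μ k) / (1 + (lam : ℂ))) ^ i) atTop
          (nhds (∑ k : Fin m, if k = 0 then b 0 j else 0)) := by
        apply tendsto_finset_sum
        intro k _
        rcases eq_or_ne k 0 with rfl | hk
        · have : ∀ i : ℕ, (b.repr v0 0 * b 0 j / b.repr v0 0) *
              ((1 + μ 0) / (1 + (lam : ℂ))) ^ i = b 0 j := by
            intro i
            rw [hμ0, div_self hLne, one_pow, mul_one]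
            field_simp
          simp only [if_pos rfl]
          exact tendsto_const_nhds.congr fun i => (this i).symm
        · rw [if_neg hk]
          have h3 := tendsto_pow_atTop_nhds_zero_of_norm_lt_one (hratio k hk)
          simpa using h3.const_mul (b.repr v0 k * b k j / b.repr v0 0)
      rw [Finset.sum_ite_eq' Finset.univ (0 : Fin m) (fun _ => b 0 j)] at h2
      simp only [Finset.mem_univ, if_true] at h2
      exact h2.congr fun i => (hform i).symm
    have hb00 : b 0 0 = (lam : ℂ) ^ (m - 1) := by
      rw [hb0]
      show ((lam : ℂ)) ^ (m - 1 - (0 : Fin m).val) = _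
      congr 1
    have hb01 : b 0 ⟨1, hm⟩ = (lam : ℂ) ^ (m - 2) := by
      rw [hb0]
      show ((lam : ℂ)) ^ (m - 1 - (⟨1, hm⟩ : Fin m).val) = _
      congr 1
    have hbne : ((lam : ℂ)) ^ (m - 2) ≠ 0 := pow_ne_zero _ hlamC
    have hdiv := (hg 0).div (hg ⟨1, hm⟩) (by rw [hb01]; exact hbne)
    have hlim : b 0 0 / b 0 ⟨1, hm⟩ = (lam : ℂ) := by
      rw [hb00, hb01, show m - 1 = (m - 2) + 1 by omega, pow_succ, mul_comm,
        mul_div_assoc, div_self hbne, mul_one]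
    rw [hlim] at hdiv
    have hD : ∀ i : ℕ, b.repr v0 0 * (1 + (lam : ℂ)) ^ i ≠ 0 := fun i =>
      mul_ne_zero hc0 (hLpow i)
    have hsimp : ∀ i : ℕ,
        (((countVec m ((replWord m a)^[i] W₀) 0 : ℤ) : ℂ) / (b.repr v0 0 * (1 + (lam : ℂ)) ^ i)) /
          (((countVec m ((replWord m a)^[i] W₀) ⟨1, hm⟩ : ℤ) : ℂ) / (b.repr v0 0 * (1 + (lam : ℂ)) ^ i))
        = ((countVec m ((replWord m a)^[i] W₀) 0 : ℤ) : ℂ) /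
            ((countVec m ((replWord m a)^[i] W₀) ⟨1, hm⟩ : ℤ) : ℂ) := by
      intro i
      rcases eq_or_ne (((countVec m ((replWord m a)^[i] W₀) ⟨1, hm⟩ : ℤ) : ℂ)) 0 with h | h
      · simp [h]
      · field_simp
    have hdiv2 : Tendsto (fun i : ℕ => ((countVec m ((replWord m a)^[i] W₀) 0 : ℤ) : ℂ) /
        ((countVec m ((replWord m a)^[i] W₀) ⟨1, hm⟩ : ℤ) : ℂ)) atTop (nhds (lam : ℂ)) :=
      hdiv.congr fun i => hsimp i
    rw [← Filter.tendsto_ofReal_iff]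
    refine hdiv2.congr fun i => ?_
    push_cast
    ring
end
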